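/- Let T > 0, Γ > 0, γ > 0, let Z : [0,∞) → ℝ be continuous, and let V : [0,∞) → ℝ be continuous and, for each k ∈ ℕ, differentiable on (2kT, (2k+1)T) with V'(t) = −4ΓV(t) − 2γZ(t)² there, and differentiable on ((2k+1)T, 2(k+1)T) with V'(t) = 4ΓV(t) − 2γZ(t)² there. Define g : [0,∞) → ℝ by g(t) = e^{4Γ(t−2kT)} for t ∈ [2kT,(2k+1)T) and g(t) = e^{−4Γ(t−2(k+1)T)} for t ∈ [(2k+1)T, 2(k+1)T), where k = ⌊t/(2T)⌋. Then for every k ∈ ℕ, V(2(k+1)T) − V(2kT) = −2γ·∫_{2kT}^{2(k+1)T} g(t)Z(t)² dt, and in particular the sequence (V(2kT))_{k∈ℕ} is decreasing. -/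

import Mathlib

open Set Filter MeasureTheory

lemma aux_ftc (c γ : ℝ) (Z V : ℝ → ℝ) (a m r : ℝ) (hle : a ≤ m)
    (hV : ContinuousOn V (Icc a m)) (hZ : ContinuousOn Z (Icc a m))
    (hd : ∀ t ∈ Ioo a m, HasDerivAt V (c * V t - 2*γ*(Z t)^2) t) :
    ∫ t in a..m, Real.exp (-c*(t-r)) * (-(2*γ)*(Z t)^2)
      = Real.exp (-c*(m-r)) * V m - Real.exp (-c*(a-r)) * V a := by
  have hec : Continuous fun t : ℝ => Real.exp (-c*(t-r)) :=
    Real.continuous_exp.comp (continuous_const.mul (continuous_id.sub continuous_const))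
  have hF : ∀ t ∈ Ioo a m, HasDerivAt (fun t => Real.exp (-c*(t-r)) * V t)
      (Real.exp (-c*(t-r)) * (-(2*γ)*(Z t)^2)) t := by
    intro t ht
    have he : HasDerivAt (fun t => Real.exp (-c*(t-r))) (-c * Real.exp (-c*(t-r))) t := by
      have h0 : HasDerivAt (fun t : ℝ => -c*(t-r)) (-c) t := by
        simpa using ((hasDerivAt_id t).sub_const r).const_mul (-c)
      simpa [mul_comm] using h0.exp
    have := he.mul (hd t ht)
    exact this.congr_deriv (by ring)
  apply intervalIntegral.integral_eq_sub_of_hasDeriv_right_of_le hle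
  · exact hec.continuousOn.mul hV
  · intro t ht; exact (hF t ht).hasDerivWithinAt
  · apply ContinuousOn.intervalIntegrable
    rw [uIcc_of_le hle]
    exact hec.continuousOn.mul (continuousOn_const.mul (hZ.pow 2))

lemma cycle_lemma (Γ γ : ℝ) (Z V g : ℝ → ℝ) (a m b : ℝ) (ham : a < m) (hmb : m < b)
    (hV : ContinuousOn V (Icc a b)) (hZ : ContinuousOn Z (Icc a b))
    (hdf : ∀ t ∈ Ioo a m, HasDerivAt V (-4*Γ*V t - 2*γ*(Z t)^2) t)
    (hdb : ∀ t ∈ Ioo m b, HasDerivAt V (4*Γ*V t - 2*γ*(Z t)^2) t)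
    (hg1 : ∀ t ∈ Icc a m, g t = Real.exp (4*Γ*(t-a)))
    (hg2 : ∀ t ∈ Icc m b, g t = Real.exp (-4*Γ*(t-b)))
    (hmid : m - a = b - m) :
    V b - V a = -2*γ * ∫ t in a..b, g t * (Z t)^2 := by
  have hA : Icc a m ⊆ Icc a b := Icc_subset_Icc le_rfl hmb.le
  have hB : Icc m b ⊆ Icc a b := Icc_subset_Icc ham.le le_rfl
  have hec1 : Continuous fun t : ℝ => Real.exp (4*Γ*(t-a)) :=
    Real.continuous_exp.comp (continuous_const.mul (continuous_id.sub continuous_const))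
  have hec2 : Continuous fun t : ℝ => Real.exp (-4*Γ*(t-b)) :=
    Real.continuous_exp.comp (continuous_const.mul (continuous_id.sub continuous_const))
  have hgc1 : ContinuousOn g (Icc a m) := ContinuousOn.congr hec1.continuousOn hg1
  have hgc2 : ContinuousOn g (Icc m b) := ContinuousOn.congr hec2.continuousOn hg2
  have hi1 : IntervalIntegrable (fun t => -(2*γ)*(g t*(Z t)^2)) volume a m := by
    apply ContinuousOn.intervalIntegrable
    rw [uIcc_of_le ham.le]
    exact continuousOn_const.mul (hgc1.mul (((hZ.mono hA)).pow 2))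
  have hi2 : IntervalIntegrable (fun t => -(2*γ)*(g t*(Z t)^2)) volume m b := by
    apply ContinuousOn.intervalIntegrable
    rw [uIcc_of_le hmb.le]
    exact continuousOn_const.mul (hgc2.mul (((hZ.mono hB)).pow 2))
  have hsum := intervalIntegral.integral_add_adjacent_intervals hi1 hi2
  have e1 : ∫ t in a..m, -(2*γ)*(g t*(Z t)^2)
      = Real.exp (-(-4*Γ)*(m-a)) * V m - Real.exp (-(-4*Γ)*(a-a)) * V a := by
    rw [intervalIntegral.integral_congr (g := fun t => Real.exp (-(-4*Γ)*(t-a)) * (-(2*γ)*(Z t)^2))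
      (by intro t ht; rw [uIcc_of_le ham.le] at ht
          have he : -(-4*Γ)*(t-a) = 4*Γ*(t-a) := by ring
          simp only [he, hg1 t ht]; ring)]
    exact aux_ftc (-4*Γ) γ Z V a m a ham.le (hV.mono hA) (hZ.mono hA)
      (by intro t ht
          have := hdf t ht
          convert this using 2)
  have e2 : ∫ t in m..b, -(2*γ)*(g t*(Z t)^2)
      = Real.exp (-(4*Γ)*(b-b)) * V b - Real.exp (-(4*Γ)*(m-b)) * V m := by
    rw [intervalIntegral.integral_congr (g := fun t => Real.exp (-(4*Γ)*(t-b)) * (-(2*γ)*(Z t)^2))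
      (by intro t ht; rw [uIcc_of_le hmb.le] at ht
          have he : -(4*Γ)*(t-b) = -4*Γ*(t-b) := by ring
          simp only [he, hg2 t ht]; ring)]
    exact aux_ftc (4*Γ) γ Z V m b b hmb.le (hV.mono hB) (hZ.mono hB)
      (by intro t ht
          have := hdb t ht
          convert this using 2)
  have hexp_eq : Real.exp (-(-4*Γ)*(m-a)) = Real.exp (-(4*Γ)*(m-b)) := by
    congr 1
    linear_combination 4*Γ*hmid
  have hfinal : ∫ t in a..b, -(2*γ)*(g t*(Z t)^2) = V b - V a := by
    rw [← hsum, e1, e2, hexp_eq]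
    simp
  rw [show (-2*γ : ℝ) = -(2*γ) by ring, ← intervalIntegral.integral_const_mul]
  exact hfinal.symm

/-- over each back-and-forth cycle the Lyapunov function decreases by
`2γ ∫ g Z²`, hence `(V(2kT))ₖ` is decreasing. -/
theorem bfn_lyapunov_cycle_decrease
    (T Γ γ : ℝ) (hT : 0 < T) (hΓ : 0 < Γ) (hγ : 0 < γ)
    (Z V g : ℝ → ℝ)
    (hZ : ContinuousOn Z (Ici 0)) (hV : ContinuousOn V (Ici 0))
    (hVf : ∀ k : ℕ, ∀ t ∈ Ioo (2*(k:ℝ)*T) ((2*(k:ℝ)+1)*T),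
      HasDerivAt V (-4*Γ*V t - 2*γ*(Z t)^2) t)
    (hVb : ∀ k : ℕ, ∀ t ∈ Ioo ((2*(k:ℝ)+1)*T) (2*((k:ℝ)+1)*T),
      HasDerivAt V (4*Γ*V t - 2*γ*(Z t)^2) t)
    (hgf : ∀ k : ℕ, ∀ t ∈ Ico (2*(k:ℝ)*T) ((2*(k:ℝ)+1)*T),
      g t = Real.exp (4*Γ*(t - 2*(k:ℝ)*T)))
    (hgb : ∀ k : ℕ, ∀ t ∈ Ico ((2*(k:ℝ)+1)*T) (2*((k:ℝ)+1)*T),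
      g t = Real.exp (-4*Γ*(t - 2*((k:ℝ)+1)*T))) :
    (∀ k : ℕ, V (2*((k:ℝ)+1)*T) - V (2*(k:ℝ)*T)
      = -2*γ * ∫ t in (2*(k:ℝ)*T)..(2*((k:ℝ)+1)*T), g t * (Z t)^2) ∧
    Antitone (fun k : ℕ => V (2*(k:ℝ)*T)) := by
  have hgend : ∀ k : ℕ, g (2*((k:ℝ)+1)*T) = 1 := by
    intro k
    have hk0 : (0:ℝ) ≤ (k:ℝ) := Nat.cast_nonneg k
    have hmem : 2*((k:ℝ)+1)*T ∈ Ico (2*(((k+1:ℕ)):ℝ)*T) ((2*(((k+1:ℕ)):ℝ)+1)*T) := by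
      push_cast
      constructor
      · exact le_of_eq (by ring)
      · nlinarith
    rw [hgf (k+1) _ hmem]
    push_cast
    rw [show 4*Γ*(2*((k:ℝ)+1)*T - 2*((k:ℝ)+1)*T) = 0 by ring, Real.exp_zero]
  have key : ∀ k : ℕ, V (2*((k:ℝ)+1)*T) - V (2*(k:ℝ)*T)
      = -2*γ * ∫ t in (2*(k:ℝ)*T)..(2*((k:ℝ)+1)*T), g t * (Z t)^2 := by
    intro k
    have hk0 : (0:ℝ) ≤ (k:ℝ) := Nat.cast_nonneg k
    have ham : 2*(k:ℝ)*T < (2*(k:ℝ)+1)*T := by nlinarith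
    have hmb : (2*(k:ℝ)+1)*T < 2*((k:ℝ)+1)*T := by nlinarith
    have hsub : Icc (2*(k:ℝ)*T) (2*((k:ℝ)+1)*T) ⊆ Ici 0 := fun t ht => le_trans (by positivity) ht.1
    apply cycle_lemma Γ γ Z V g _ _ _ ham hmb (hV.mono hsub) (hZ.mono hsub)
      (hVf k) (hVb k)
    · intro t ht
      rcases lt_or_eq_of_le ht.2 with h | h
      · exact hgf k t ⟨ht.1, h⟩
      · rw [h, hgb k _ ⟨le_refl _, hmb⟩]
        congr 1
        ring
    · intro t ht
      rcases lt_or_eq_of_le ht.2 with h | h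
      · exact hgb k t ⟨ht.1, h⟩
      · rw [h, hgend k]
        rw [show -4*Γ*(2*((k:ℝ)+1)*T - 2*((k:ℝ)+1)*T) = 0 by ring, Real.exp_zero]
    · ring
  refine ⟨key, ?_⟩
  apply antitone_nat_of_succ_le
  intro k
  have hk0 : (0:ℝ) ≤ (k:ℝ) := Nat.cast_nonneg k
  have hnn : 0 ≤ ∫ t in (2*(k:ℝ)*T)..(2*((k:ℝ)+1)*T), g t * (Z t)^2 := by
    apply intervalIntegral.integral_nonneg (by nlinarith)
    intro u hu
    have hgnn : 0 ≤ g u := by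
      rcases lt_or_ge u ((2*(k:ℝ)+1)*T) with h | h
      · rw [hgf k u ⟨hu.1, h⟩]; positivity
      · rcases lt_or_eq_of_le hu.2 with h' | h'
        · rw [hgb k u ⟨h, h'⟩]; positivity
        · rw [h', hgend k]; norm_num
    exact mul_nonneg hgnn (sq_nonneg _)
  have hk := key k
  push_cast
  nlinarith
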